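/- arXiv:0904.2441 — 5 statements merged into one kernel-verified Lean document; each statement's English description precedes it below -/
import Mathlib

section
/- For every integer N ≥ 1 and every p ∈ [0,1], if (K1,K2,K3) follows a multinomial distribution with N trials and category probabilities ((1-p)^2, 2p(1-p), p^2), then the expected value of the error-probability estimator satisfies E[g(K1,K2)] = 2N(p - p^{2N})/(2N - 1) + p^{2N}. -/
open Finset

/-- Joint probability mass function of `(K1, K2)` where `(K1, K2, K3)` is multinomial with
`N` trials and category probabilities `((1-p)^2, 2p(1-p), p^2)` (with `K3 = N - K1 - K2`). -/
noncomputable def multinomialPMF (N : ℕ) (p : ℝ) (k1 k2 : ℕ) : ℝ :=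
  ((N.factorial : ℝ) / (k1.factorial * k2.factorial * (N - k1 - k2).factorial)) *
    (1 - p) ^ (2 * k1) * (2 * (1 - p) * p) ^ k2 * p ^ (2 * (N - k1 - k2))

/-- The error-probability estimator. -/
noncomputable def g (k1 k2 : ℕ) : ℝ :=
  if k1 = 0 ∧ k2 = 0 then 1
  else if k2 = 0 then 0
  else (k2 : ℝ) / (2 * k1 + k2)

/-- Expected value of `g (K1, K2)` under the multinomial distribution. -/
noncomputable def expectation_g (N : ℕ) (p : ℝ) : ℝ :=
  ∑ k1 ∈ Finset.range (N + 1), ∑ k2 ∈ Finset.range (N - k1 + 1),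
    g k1 k2 * multinomialPMF N p k1 k2


private lemma fact_div_eq (N k1 k2 : ℕ) (h : k1 + k2 ≤ N) :
    ((N.factorial : ℝ) / (k1.factorial * k2.factorial * (N - k1 - k2).factorial))
      = (N.choose k1 : ℝ) * ((N - k1).choose k2 : ℝ) := by
  have h1 : k1 ≤ N := by omega
  have h2 : k2 ≤ N - k1 := by omega
  have e1 := Nat.choose_mul_factorial_mul_factorial h1
  have e2 := Nat.choose_mul_factorial_mul_factorial h2
  have key : N.choose k1 * (N - k1).choose k2 *
      (k1.factorial * k2.factorial * (N - k1 - k2).factorial) = N.factorial := by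
    calc N.choose k1 * (N - k1).choose k2 *
          (k1.factorial * k2.factorial * (N - k1 - k2).factorial)
        = (N.choose k1 * k1.factorial) *
            ((N - k1).choose k2 * k2.factorial * (N - k1 - k2).factorial) := by ring
      _ = (N.choose k1 * k1.factorial) * (N - k1).factorial := by rw [e2]
      _ = N.factorial := by rw [← e1]
  have hf : ((k1.factorial * k2.factorial * (N - k1 - k2).factorial : ℕ) : ℝ) ≠ 0 := by
    positivity
  rw [div_eq_iff (by push_cast at hf ⊢; exact hf)]
  calc (N.factorial : ℝ)
      = ((N.choose k1 * (N - k1).choose k2 *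
          (k1.factorial * k2.factorial * (N - k1 - k2).factorial) : ℕ) : ℝ) := by rw [key]
    _ = _ := by push_cast; ring

private lemma L1 (n : ℕ) (c t z : ℝ) :
    ∑ k ∈ range (n + 1), (k : ℝ) * (n.choose k : ℝ) * c ^ k * t ^ (k - 1) * z ^ (n - k)
      = (n : ℝ) * c * (c * t + z) ^ (n - 1) := by
  cases n with
  | zero => simp
  | succ m =>
    rw [Finset.sum_range_succ']
    have hcoef : ∀ j, (((j : ℕ) + 1 : ℕ) : ℝ) * ((m + 1).choose (j + 1) : ℝ)
        = ((m : ℝ) + 1) * (m.choose j : ℝ) := by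
      intro j
      have := Nat.add_one_mul_choose_eq m j
      have : ((Nat.succ m * m.choose j : ℕ) : ℝ) = (((m + 1).choose (j + 1) * (j + 1) : ℕ) : ℝ) := by
        rw [this]
      push_cast at this
      push_cast
      linarith [this]
    have step : ∀ j ∈ range (m + 1),
        ((j + 1 : ℕ) : ℝ) * ((m + 1).choose (j + 1) : ℝ) * c ^ (j + 1) * t ^ (j + 1 - 1) *
            z ^ (m + 1 - (j + 1))
          = ((m : ℝ) + 1) * c * ((c * t) ^ j * z ^ (m - j) * (m.choose j : ℝ)) := by
      intro j hj
      have : (j + 1) - 1 = j := by omega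
      rw [this]
      have : (m + 1) - (j + 1) = m - j := by omega
      rw [this]
      rw [hcoef j, mul_pow]
      ring
    rw [Finset.sum_congr rfl step, ← Finset.mul_sum, ← add_pow]
    push_cast
    simp

private lemma L2 (n : ℕ) (x w : ℝ) :
    ∑ k ∈ range (n + 1), (n.choose k : ℝ) * x ^ k * ((n - k : ℕ) : ℝ) * w ^ (n - k - 1)
      = (n : ℝ) * (x + w) ^ (n - 1) := by
  cases n with
  | zero => simp
  | succ m =>
    rw [Finset.sum_range_succ]
    have hz : (((m + 1) - (m + 1) : ℕ) : ℝ) = 0 := by norm_num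
    have step : ∀ k ∈ range (m + 1),
        ((m + 1).choose k : ℝ) * x ^ k * (((m + 1) - k : ℕ) : ℝ) * w ^ ((m + 1) - k - 1)
          = ((m : ℝ) + 1) * (x ^ k * w ^ (m - k) * (m.choose k : ℝ)) := by
      intro k hk
      have hk' : k ≤ m := by simpa [Nat.lt_succ_iff] using hk
      have hnat : (m + 1).choose k * ((m + 1) - k) = (m + 1) * m.choose k := by
        rw [← Nat.choose_succ_right_eq, ← Nat.add_one_mul_choose_eq]
      have hcast : ((m + 1).choose k : ℝ) * (((m + 1) - k : ℕ) : ℝ)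
          = ((m : ℝ) + 1) * (m.choose k : ℝ) := by
        have := congrArg (fun n : ℕ => (n : ℝ)) hnat
        push_cast at this
        linarith [this]
      have he : (m + 1) - k - 1 = m - k := by omega
      rw [he]
      calc ((m + 1).choose k : ℝ) * x ^ k * (((m + 1) - k : ℕ) : ℝ) * w ^ (m - k)
          = (((m + 1).choose k : ℝ) * (((m + 1) - k : ℕ) : ℝ)) * (x ^ k * w ^ (m - k)) := by ring
        _ = _ := by rw [hcast]; ring
    rw [Finset.sum_congr rfl step, ← Finset.mul_sum, ← add_pow]
    simp

private lemma stepD (N : ℕ) (hN : 1 ≤ N) (p t : ℝ) :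
    ∑ k1 ∈ range (N + 1), ∑ k2 ∈ range (N - k1 + 1),
      (k2 : ℝ) * (N.choose k1 : ℝ) * ((N - k1).choose k2 : ℝ) * (2 * p) ^ k2 *
        t ^ (2 * k1) * t ^ (k2 - 1) * (p ^ 2) ^ (N - k1 - k2)
      = 2 * (N : ℝ) * p * (t + p) ^ (2 * N - 2) := by
  have inner : ∀ k1 ∈ range (N + 1),
      (∑ k2 ∈ range (N - k1 + 1),
        (k2 : ℝ) * (N.choose k1 : ℝ) * ((N - k1).choose k2 : ℝ) * (2 * p) ^ k2 *
          t ^ (2 * k1) * t ^ (k2 - 1) * (p ^ 2) ^ (N - k1 - k2))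
      = (2 * p) * ((N.choose k1 : ℝ) * (t ^ 2) ^ k1 * ((N - k1 : ℕ) : ℝ) *
          ((2 * p) * t + p ^ 2) ^ (N - k1 - 1)) := by
    intro k1 _
    have h1 : (∑ k2 ∈ range (N - k1 + 1),
        (k2 : ℝ) * (N.choose k1 : ℝ) * ((N - k1).choose k2 : ℝ) * (2 * p) ^ k2 *
          t ^ (2 * k1) * t ^ (k2 - 1) * (p ^ 2) ^ (N - k1 - k2))
        = (N.choose k1 : ℝ) * t ^ (2 * k1) *
          ∑ k2 ∈ range (N - k1 + 1),
            (k2 : ℝ) * ((N - k1).choose k2 : ℝ) * (2 * p) ^ k2 * t ^ (k2 - 1) *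
              (p ^ 2) ^ (N - k1 - k2) := by
      rw [Finset.mul_sum]
      exact Finset.sum_congr rfl fun k2 _ => by ring
    rw [h1, L1 (N - k1) (2 * p) t (p ^ 2), pow_mul]
    ring
  rw [Finset.sum_congr rfl inner, ← Finset.mul_sum, L2 N (t ^ 2) ((2 * p) * t + p ^ 2)]
  have h2 : t ^ 2 + (2 * p * t + p ^ 2) = (t + p) ^ 2 := by ring
  rw [h2, ← pow_mul]
  have h3 : 2 * (N - 1) = 2 * N - 2 := by omega
  rw [h3]
  ring

private lemma stepB (N k1 k2 : ℕ) (p : ℝ) :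
    (if k2 = 0 then (0:ℝ) else
      ((k2 : ℝ) / (2 * (k1 : ℝ) + (k2 : ℝ))) * (N.choose k1 : ℝ) * ((N - k1).choose k2 : ℝ) *
        (2 * p) ^ k2 * (1 - p) ^ (2 * k1 + k2) * (p ^ 2) ^ (N - k1 - k2))
    = ∫ t in (0:ℝ)..(1 - p),
        (k2 : ℝ) * (N.choose k1 : ℝ) * ((N - k1).choose k2 : ℝ) * (2 * p) ^ k2 *
          t ^ (2 * k1) * t ^ (k2 - 1) * (p ^ 2) ^ (N - k1 - k2) := by
  rcases Nat.eq_zero_or_pos k2 with h0 | hpos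
  · subst h0
    simp
  · rw [if_neg (by omega)]
    have key : ∀ t : ℝ,
        (k2 : ℝ) * (N.choose k1 : ℝ) * ((N - k1).choose k2 : ℝ) * (2 * p) ^ k2 *
          t ^ (2 * k1) * t ^ (k2 - 1) * (p ^ 2) ^ (N - k1 - k2)
        = ((k2 : ℝ) * (N.choose k1 : ℝ) * ((N - k1).choose k2 : ℝ) * (2 * p) ^ k2 *
            (p ^ 2) ^ (N - k1 - k2)) * t ^ (2 * k1 + k2 - 1) := by
      intro t
      have he : 2 * k1 + k2 - 1 = 2 * k1 + (k2 - 1) := by omega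
      rw [he, pow_add]
      ring
    simp only [key]
    rw [intervalIntegral.integral_const_mul, integral_pow]
    have hm : 2 * k1 + k2 - 1 + 1 = 2 * k1 + k2 := by omega
    rw [hm]
    have hc : ((2 * k1 + k2 - 1 : ℕ) : ℝ) + 1 = 2 * (k1 : ℝ) + (k2 : ℝ) := by
      have : (2 * k1 + k2 - 1 : ℕ) + 1 = 2 * k1 + k2 := by omega
      have := congrArg (fun n : ℕ => (n : ℝ)) this
      push_cast at this
      linarith
    rw [hc]
    have hz : (0 : ℝ) ^ (2 * k1 + k2) = 0 := by
      apply zero_pow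
      omega
    rw [hz]
    have hm0 : 2 * (k1 : ℝ) + (k2 : ℝ) ≠ 0 := by
      have : (1 : ℝ) ≤ (k2 : ℝ) := by exact_mod_cast hpos
      positivity
    field_simp
    ring

private lemma hterm (N : ℕ) (p : ℝ) :
    ∀ k1 ∈ range (N + 1), ∀ k2 ∈ range (N - k1 + 1),
      g k1 k2 * multinomialPMF N p k1 k2 =
        (if k1 = 0 ∧ k2 = 0 then p ^ (2 * N) else 0) +
        (if k2 = 0 then (0:ℝ) else
          ((k2 : ℝ) / (2 * (k1:ℝ) + (k2:ℝ))) * (N.choose k1 : ℝ) * ((N - k1).choose k2 : ℝ) *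
            (2 * p) ^ k2 * (1 - p) ^ (2 * k1 + k2) * (p ^ 2) ^ (N - k1 - k2)) := by
  intro k1 hk1 k2 hk2
  rw [Finset.mem_range] at hk1 hk2
  have hle : k1 + k2 ≤ N := by omega
  rcases eq_or_ne k2 0 with h2 | h2
  · subst h2
    rcases eq_or_ne k1 0 with h1 | h1
    · subst h1
      simp only [g, multinomialPMF, if_pos (And.intro rfl rfl), if_pos rfl]
      have : ((Nat.factorial 0 : ℕ) : ℝ) = 1 := by norm_num [Nat.factorial]
      simp [Nat.factorial, div_self (show ((N.factorial : ℕ) : ℝ) ≠ 0 by positivity)]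
    · simp [g, h1]
  · have hg : g k1 k2 = (k2 : ℝ) / (2 * (k1:ℝ) + (k2:ℝ)) := by
      simp [g, h2]
    rw [hg, multinomialPMF, fact_div_eq N k1 k2 hle]
    rw [if_neg h2, if_neg (by tauto)]
    rw [pow_add, pow_mul]
    simp only [mul_pow]
    ring
private lemma stepA (N : ℕ) (p : ℝ) :
    expectation_g N p = p ^ (2 * N) +
      ∑ k1 ∈ range (N + 1), ∑ k2 ∈ range (N - k1 + 1),
        (if k2 = 0 then (0:ℝ) else
          ((k2 : ℝ) / (2 * (k1:ℝ) + (k2:ℝ))) * (N.choose k1 : ℝ) * ((N - k1).choose k2 : ℝ) *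
            (2 * p) ^ k2 * (1 - p) ^ (2 * k1 + k2) * (p ^ 2) ^ (N - k1 - k2)) := by
  unfold expectation_g
  rw [Finset.sum_congr rfl (fun k1 hk1 => Finset.sum_congr rfl (hterm N p k1 hk1))]
  rw [Finset.sum_congr rfl (fun k1 _ => Finset.sum_add_distrib), Finset.sum_add_distrib]
  congr 1
  have e1 : ∀ k1 ∈ range (N + 1),
      (∑ k2 ∈ range (N - k1 + 1), (if k1 = 0 ∧ k2 = 0 then p ^ (2 * N) else 0))
        = if k1 = 0 then p ^ (2 * N) else 0 := by
    intro k1 _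
    rcases eq_or_ne k1 0 with h | h
    · subst h
      rw [if_pos rfl, Finset.sum_eq_single 0]
      · simp
      · intro b _ hb; simp [hb]
      · intro h0; exact absurd (Finset.mem_range.mpr (by omega)) h0
    · simp [h]
  rw [Finset.sum_congr rfl e1, Finset.sum_eq_single 0]
  · simp
  · intro b _ hb; simp [hb]
  · intro h0; exact absurd (Finset.mem_range.mpr (by omega)) h0

theorem expected_value_of_error_probability_estimator
    (N : ℕ) (hN : 1 ≤ N) (p : ℝ) (hp : p ∈ Set.Icc (0 : ℝ) 1) :
    expectation_g N p =
      2 * (N : ℝ) * (p - p ^ (2 * N)) / (2 * (N : ℝ) - 1) + p ^ (2 * N) := by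
  have hint : ∀ (k1 k2 : ℕ), IntervalIntegrable
      (fun t : ℝ => (k2 : ℝ) * (N.choose k1 : ℝ) * ((N - k1).choose k2 : ℝ) * (2 * p) ^ k2 *
        t ^ (2 * k1) * t ^ (k2 - 1) * (p ^ 2) ^ (N - k1 - k2))
      MeasureTheory.volume 0 (1 - p) := by
    intro k1 k2
    apply Continuous.intervalIntegrable
    fun_prop
  rw [stepA N p]
  rw [Finset.sum_congr rfl (fun k1 _ => Finset.sum_congr rfl (fun k2 _ => stepB N k1 k2 p))]
  rw [Finset.sum_congr rfl
    (fun k1 _ => (intervalIntegral.integral_finset_sum (fun k2 _ => hint k1 k2)).symm)]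
  rw [← intervalIntegral.integral_finset_sum (fun k1 _ => by
    apply Continuous.intervalIntegrable
    apply continuous_finset_sum
    intro k2 _
    fun_prop)]
  simp only [stepD N hN p]
  rw [intervalIntegral.integral_const_mul]
  have hint2 : (∫ t in (0:ℝ)..(1 - p), (t + p) ^ (2 * N - 2))
      = (1 - p ^ (2 * N - 1)) / (2 * (N:ℝ) - 1) := by
    rw [intervalIntegral.integral_comp_add_right (fun u => u ^ (2 * N - 2)) p]
    rw [integral_pow]
    have h1 : 2 * N - 2 + 1 = 2 * N - 1 := by omega
    have h2 : (0:ℝ) + p = p := by ring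
    have h3 : (1:ℝ) - p + p = 1 := by ring
    rw [h1, h2, h3, one_pow]
    congr 1
    have : ((2 * N - 2 : ℕ) : ℝ) = 2 * (N:ℝ) - 2 := by
      have h4 : (2 * N - 2) + 2 = 2 * N := by omega
      have := congrArg (fun n : ℕ => (n : ℝ)) h4
      push_cast at this
      linarith
    rw [this]
    ring
  rw [hint2]
  have hd : (2 * (N:ℝ) - 1) ≠ 0 := by
    have : (1:ℝ) ≤ (N:ℝ) := by exact_mod_cast hN
    nlinarith
  have hpp : p * p ^ (2 * N - 1) = p ^ (2 * N) := by
    rw [← pow_succ']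
    congr 1
    omega
  field_simp
  nlinarith [hpp, sq_nonneg p]
end

section
/- For every integer N ≥ 1 and every p ∈ [0,1], if (K1,K2,K3) follows a multinomial distribution with N trials and category probabilities ((1-p)^2, 2p(1-p), p^2), then the bias of the error-probability estimator equals E[g(K1,K2)] - p = (p - p^{2N})/(2N - 1). -/
open Finset

lemma multi_coeff (N k1 k2 : ℕ) (h1 : k1 ≤ N) (h2 : k2 ≤ N - k1) :
    ((N.factorial : ℝ) / (k1.factorial * k2.factorial * (N - k1 - k2).factorial))
      = (N.choose k1 : ℝ) * ((N - k1).choose k2) := by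
  have e1 : N.choose k1 * k1.factorial * (N - k1).factorial = N.factorial :=
    Nat.choose_mul_factorial_mul_factorial h1
  have e2 : (N - k1).choose k2 * k2.factorial * (N - k1 - k2).factorial = (N - k1).factorial :=
    Nat.choose_mul_factorial_mul_factorial h2
  have h3 : (k1.factorial : ℝ) ≠ 0 := Nat.cast_ne_zero.2 k1.factorial_ne_zero
  have h4 : (k2.factorial : ℝ) ≠ 0 := Nat.cast_ne_zero.2 k2.factorial_ne_zero
  have h5 : ((N - k1 - k2).factorial : ℝ) ≠ 0 := Nat.cast_ne_zero.2 (N - k1 - k2).factorial_ne_zero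
  field_simp
  rw [← e1, ← e2]
  push_cast
  ring

lemma trinom (N : ℕ) (A B C : ℝ) :
    ∑ k1 ∈ range (N + 1), ∑ k2 ∈ range (N - k1 + 1),
      ((N.factorial : ℝ) / (k1.factorial * k2.factorial * (N - k1 - k2).factorial))
        * A ^ k1 * B ^ k2 * C ^ (N - k1 - k2) = (A + B + C) ^ N := by
  rw [add_assoc, add_pow]
  refine Finset.sum_congr rfl fun k1 hk1 => ?_
  have h1 : k1 ≤ N := Nat.lt_succ_iff.mp (mem_range.mp hk1)
  rw [add_pow, Finset.mul_sum, Finset.sum_mul]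
  refine Finset.sum_congr rfl fun k2 hk2 => ?_
  have h2 : k2 ≤ N - k1 := Nat.lt_succ_iff.mp (mem_range.mp hk2)
  rw [multi_coeff N k1 k2 h1 h2]
  ring

lemma trinom_deriv (N : ℕ) (hN : 1 ≤ N) (A B C : ℝ) :
    ∑ k1 ∈ range (N + 1), ∑ k2 ∈ range (N - k1 + 1),
      (k2 : ℝ) * ((N.factorial : ℝ) / (k1.factorial * k2.factorial * (N - k1 - k2).factorial))
        * A ^ k1 * B ^ (k2 - 1) * C ^ (N - k1 - k2)
    = N * (A + B + C) ^ (N - 1) := by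
  obtain ⟨M, rfl⟩ : ∃ M, N = M + 1 := ⟨N - 1, (Nat.succ_pred_eq_of_pos hN).symm⟩
  rw [Finset.sum_range_succ]
  have hlast : (M + 1) - (M + 1) + 1 = 1 := by omega
  rw [hlast]
  simp only [Finset.sum_range_one, Nat.cast_zero, zero_mul, add_zero]
  rw [show M + 1 - 1 = M by omega, ← trinom M A B C, Finset.mul_sum]
  refine Finset.sum_congr rfl fun k1 hk1 => ?_
  have h1 : k1 ≤ M := Nat.lt_succ_iff.mp (mem_range.mp hk1)
  have hr : (M + 1) - k1 + 1 = (M - k1 + 1) + 1 := by omega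
  rw [hr, Finset.sum_range_succ', Finset.mul_sum]
  simp only [Nat.cast_zero, zero_mul]
  rw [add_zero]
  refine Finset.sum_congr rfl fun j hj => ?_
  have h2 : j ≤ M - k1 := Nat.lt_succ_iff.mp (mem_range.mp hj)
  have e1 : (M + 1) - k1 - (j + 1) = M - k1 - j := by omega
  have e2 : (j + 1) - 1 = j := by omega
  rw [e1, e2]
  have hf1 : ((M + 1).factorial : ℝ) = (M + 1) * M.factorial := by
    rw [Nat.factorial_succ]; push_cast; ring
  have hf2 : ((j + 1).factorial : ℝ) = (j + 1) * j.factorial := by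
    rw [Nat.factorial_succ]; push_cast; ring
  have h3 : (k1.factorial : ℝ) ≠ 0 := Nat.cast_ne_zero.2 k1.factorial_ne_zero
  have h4 : (j.factorial : ℝ) ≠ 0 := Nat.cast_ne_zero.2 j.factorial_ne_zero
  have h5 : ((M - k1 - j).factorial : ℝ) ≠ 0 := Nat.cast_ne_zero.2 (M - k1 - j).factorial_ne_zero
  have hj1 : ((j : ℝ) + 1) ≠ 0 := by positivity
  rw [hf1, hf2]
  push_cast
  field_simp

noncomputable def Hterm (N : ℕ) (p : ℝ) (k1 k2 : ℕ) (t : ℝ) : ℝ :=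
  2 * p * (1 - p) *
    ((k2 : ℝ) * ((N.factorial : ℝ) / (k1.factorial * k2.factorial * (N - k1 - k2).factorial))
      * ((1 - p) ^ 2 * t ^ 2) ^ k1 * (2 * p * (1 - p) * t) ^ (k2 - 1) * (p ^ 2) ^ (N - k1 - k2))

lemma term_eq (N : ℕ) (p : ℝ) (k1 k2 : ℕ) :
    g k1 k2 * multinomialPMF N p k1 k2 =
      (if k1 = 0 ∧ k2 = 0 then p ^ (2 * N) else 0) + ∫ t in (0:ℝ)..1, Hterm N p k1 k2 t := by
  rcases Nat.eq_zero_or_pos k2 with hk2 | hk2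
  · subst hk2
    have hH : ∀ t : ℝ, Hterm N p k1 0 t = 0 := by intro t; simp [Hterm]
    simp only [hH, intervalIntegral.integral_zero, add_zero]
    rcases Nat.eq_zero_or_pos k1 with hk1 | hk1
    · subst hk1
      have h00 : ((N.factorial : ℝ)) ≠ 0 := Nat.cast_ne_zero.2 N.factorial_ne_zero
      simp [g, multinomialPMF, div_self h00]
    · have h1 : ¬(k1 = 0 ∧ (0:ℕ) = 0) := by omega
      simp [g, h1, hk1.ne']
  · obtain ⟨j, rfl⟩ : ∃ j, k2 = j + 1 := ⟨k2 - 1, by omega⟩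
    have hif : ¬(k1 = 0 ∧ j + 1 = 0) := by omega
    rw [if_neg hif, zero_add]
    set c : ℝ := 2 * p * (1 - p) *
      (((j:ℝ) + 1) * ((N.factorial : ℝ) / (k1.factorial * (j+1).factorial * (N - k1 - (j+1)).factorial))
        * ((1 - p) ^ 2) ^ k1 * (2 * p * (1 - p)) ^ j * (p ^ 2) ^ (N - k1 - (j+1))) with hc
    have hH : ∀ t : ℝ, Hterm N p k1 (j+1) t = c * t ^ (2 * k1 + j) := by
      intro t
      simp only [Hterm, hc, Nat.add_sub_cancel, mul_pow]
      push_cast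
      ring
    simp only [hH]
    rw [intervalIntegral.integral_const_mul, integral_pow]
    have hden : ((2 * k1 + j : ℕ) : ℝ) + 1 = 2 * (k1:ℝ) + ((j:ℝ) + 1) := by push_cast; ring
    rw [hden]
    have hgden : (2 * (k1:ℝ) + ((j:ℝ)+1)) ≠ 0 := by positivity
    have hg : g k1 (j+1) = ((j:ℝ)+1) / (2 * (k1:ℝ) + ((j:ℝ)+1)) := by
      simp [g, hif]
    rw [hg, hc]
    simp only [multinomialPMF]
    rw [one_pow, zero_pow (by omega : 2*k1+j+1 ≠ 0)]
    have hpow1 : (1 - p) ^ (2 * k1) = ((1 - p) ^ 2) ^ k1 := by rw [← pow_mul]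
    have hpow2 : (2 * (1 - p) * p) ^ (j + 1) = (2 * p * (1 - p)) * (2 * p * (1 - p)) ^ j := by
      rw [pow_succ]; ring
    have hpow3 : p ^ (2 * (N - k1 - (j+1))) = (p ^ 2) ^ (N - k1 - (j+1)) := by rw [← pow_mul]
    rw [hpow1, hpow2, hpow3]
    field_simp
    ring

theorem bias_of_error_probability_estimator
    (N : ℕ) (hN : 1 ≤ N) (p : ℝ) (hp : p ∈ Set.Icc (0 : ℝ) 1) :
    expectation_g N p - p = (p - p ^ (2 * N)) / (2 * (N : ℝ) - 1) := by
  have hN1 : (1:ℝ) ≤ N := by exact_mod_cast hN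
  have h2N : (2 * (N : ℝ) - 1) ≠ 0 := by nlinarith
  by_cases hp1 : p = 1
  · subst hp1
    have hval : expectation_g N 1 = 1 := by
      unfold expectation_g
      rw [Finset.sum_eq_single_of_mem 0 (by simp)]
      · rw [Finset.sum_eq_single_of_mem 0 (by simp)]
        · have h00 : ((N.factorial : ℝ)) ≠ 0 := Nat.cast_ne_zero.2 N.factorial_ne_zero
          simp [g, multinomialPMF, div_self h00]
        · intro k2 _ hk2
          simp [multinomialPMF, zero_pow hk2]
      · intro k1 _ hk1
        have : (2 * k1) ≠ 0 := by omega
        apply Finset.sum_eq_zero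
        intro k2 _
        simp [multinomialPMF, zero_pow this]
    rw [hval]
    simp
  · have hq : (1 : ℝ) - p ≠ 0 := sub_ne_zero.2 (fun h => hp1 h.symm)
    have hcont : ∀ k1 k2 : ℕ, Continuous (Hterm N p k1 k2) := by
      intro k1 k2; unfold Hterm; fun_prop
    have step1 : expectation_g N p =
        p ^ (2 * N) + ∑ k1 ∈ range (N + 1), ∑ k2 ∈ range (N - k1 + 1),
          ∫ t in (0:ℝ)..1, Hterm N p k1 k2 t := by
      unfold expectation_g
      have : ∀ k1 ∈ range (N + 1), ∑ k2 ∈ range (N - k1 + 1),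
          g k1 k2 * multinomialPMF N p k1 k2
          = (if k1 = 0 then p ^ (2 * N) else 0)
            + ∑ k2 ∈ range (N - k1 + 1), ∫ t in (0:ℝ)..1, Hterm N p k1 k2 t := by
        intro k1 _
        rw [Finset.sum_congr rfl (fun k2 _ => term_eq N p k1 k2), Finset.sum_add_distrib]
        congr 1
        by_cases h : k1 = 0 <;> simp [h]
      rw [Finset.sum_congr rfl this, Finset.sum_add_distrib]
      congr 1
      simp
    have step2 : ∑ k1 ∈ range (N + 1), ∑ k2 ∈ range (N - k1 + 1),
          (∫ t in (0:ℝ)..1, Hterm N p k1 k2 t)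
        = ∫ t in (0:ℝ)..1, ∑ k1 ∈ range (N + 1), ∑ k2 ∈ range (N - k1 + 1), Hterm N p k1 k2 t := by
      rw [intervalIntegral.integral_finset_sum]
      · refine Finset.sum_congr rfl fun k1 _ => ?_
        rw [intervalIntegral.integral_finset_sum]
        intro k2 _
        exact (hcont k1 k2).intervalIntegrable _ _
      · intro k1 _
        exact (continuous_finset_sum _ fun k2 _ => hcont k1 k2).intervalIntegrable _ _
    have step3 : ∀ t : ℝ, ∑ k1 ∈ range (N + 1), ∑ k2 ∈ range (N - k1 + 1), Hterm N p k1 k2 t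
        = 2 * N * p * (1 - p) * ((1 - p) * t + p) ^ (2 * N - 2) := by
      intro t
      unfold Hterm
      rw [Finset.sum_congr rfl (fun k1 _ => (Finset.mul_sum _ _ _).symm), ← Finset.mul_sum,
        trinom_deriv N hN ((1 - p) ^ 2 * t ^ 2) (2 * p * (1 - p) * t) (p ^ 2)]
      have hb : (1 - p) ^ 2 * t ^ 2 + 2 * p * (1 - p) * t + p ^ 2 = ((1 - p) * t + p) ^ 2 := by ring
      rw [hb, ← pow_mul, show 2 * (N - 1) = 2 * N - 2 by omega]
      ring
    have step4 : (∫ t in (0:ℝ)..1, 2 * (N:ℝ) * p * (1 - p) * ((1 - p) * t + p) ^ (2 * N - 2))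
        = 2 * N * p * (1 - p ^ (2 * N - 1)) / (2 * (N:ℝ) - 1) := by
      rw [intervalIntegral.integral_const_mul,
        intervalIntegral.integral_comp_mul_add (fun x => x ^ (2 * N - 2)) hq p, integral_pow]
      have e1 : (1 - p) * 0 + p = p := by ring
      have e2 : (1 - p) * 1 + p = 1 := by ring
      rw [e1, e2]
      have e3 : 2 * N - 2 + 1 = 2 * N - 1 := by omega
      have e4 : ((2 * N - 2 : ℕ) : ℝ) + 1 = 2 * (N:ℝ) - 1 := by
        have : (2 * N - 2 : ℕ) = 2 * N - 2 := rfl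
        push_cast [Nat.cast_sub (by omega : 2 ≤ 2 * N)]
        ring
      rw [e3, e4, one_pow, smul_eq_mul]
      field_simp
    rw [step1, step2]
    rw [intervalIntegral.integral_congr (fun t _ => step3 t), step4]
    have hpp : p * p ^ (2 * N - 1) = p ^ (2 * N) := by
      rw [← pow_succ']
      congr 1
      omega
    field_simp
    nlinarith [hpp, sq_nonneg p]
end

section
/- For every integer N ≥ 1 and every p ∈ [0,1], one has (p - p^{2N})/(2N - 1) ≥ 0; consequently, if (K1,K2,K3) follows a multinomial distribution with N trials and category probabilities ((1-p)^2, 2p(1-p), p^2), the error-probability estimator overestimates p in expectation: E[g(K1,K2)] ≥ p. -/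
open Finset

/-- Auxiliary: generating function for the estimator sum. -/
noncomputable def Ffun (N : ℕ) (p t : ℝ) : ℝ :=
  ∑ k1 ∈ range (N+1), ∑ k2 ∈ range (N - k1 + 1),
    if k2 = 0 then 0 else
      ((k2:ℝ)/(2*k1+k2)) *
        ((N.factorial : ℝ) / (k1.factorial * k2.factorial * (N - k1 - k2).factorial)) *
        ((1-p)^(2*k1) * (2*(1-p)*p)^k2 * p^(2*(N-k1-k2))) * t^(2*k1+k2)

lemma trinomial (M : ℕ) (a b c : ℝ) :
    ∑ k1 ∈ range (M+1), ∑ j ∈ range (M - k1 + 1),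
      ((M.factorial : ℝ) / (k1.factorial * j.factorial * (M - k1 - j).factorial))
        * a ^ k1 * b ^ j * c ^ (M - k1 - j) = (a + b + c) ^ M := by
  rw [show a + b + c = a + (b + c) by ring, add_pow]
  refine Finset.sum_congr rfl fun k1 hk1 => ?_
  have hk1' : k1 ≤ M := by simpa using Nat.lt_succ_iff.mp (Finset.mem_range.mp hk1)
  rw [add_pow, Finset.mul_sum, Finset.sum_mul]
  refine Finset.sum_congr rfl fun j hj => ?_
  have hj' : j ≤ M - k1 := Nat.lt_succ_iff.mp (Finset.mem_range.mp hj)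
  rw [Nat.cast_choose ℝ hk1', Nat.cast_choose ℝ hj']
  have h1 : (k1.factorial : ℝ) ≠ 0 := Nat.cast_ne_zero.mpr k1.factorial_ne_zero
  have h2 : (j.factorial : ℝ) ≠ 0 := Nat.cast_ne_zero.mpr j.factorial_ne_zero
  have h3 : ((M - k1).factorial : ℝ) ≠ 0 := Nat.cast_ne_zero.mpr (M - k1).factorial_ne_zero
  have h4 : ((M - k1 - j).factorial : ℝ) ≠ 0 := Nat.cast_ne_zero.mpr (M - k1 - j).factorial_ne_zero
  field_simp

set_option maxHeartbeats 1000000 in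
lemma deriv_sum_eq (N : ℕ) (hN : 1 ≤ N) (p t : ℝ) :
    (∑ k1 ∈ range (N+1), ∑ k2 ∈ range (N - k1 + 1),
      (if k2 = 0 then (0:ℝ) else
        (k2:ℝ) *
          ((N.factorial : ℝ) / (k1.factorial * k2.factorial * (N - k1 - k2).factorial)) *
          ((1-p)^(2*k1) * (2*(1-p)*p)^k2 * p^(2*(N-k1-k2))) * t^(2*k1+k2-1)))
    = 2*N*(1-p)*p*((1-p)*t+p)^(2*N-2) := by
  obtain ⟨M, rfl⟩ : ∃ M, N = M + 1 := ⟨N - 1, (Nat.succ_pred_eq_of_pos hN).symm⟩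
  have step1 : ∀ k1 ∈ range (M+1+1),
      (∑ k2 ∈ range (M+1 - k1 + 1),
        (if k2 = 0 then (0:ℝ) else
          (k2:ℝ) *
            (((M+1).factorial : ℝ) / (k1.factorial * k2.factorial * (M+1 - k1 - k2).factorial)) *
            ((1-p)^(2*k1) * (2*(1-p)*p)^k2 * p^(2*(M+1-k1-k2))) * t^(2*k1+k2-1)))
      = ∑ j ∈ range (M+1-k1),
          ((j+1:ℕ):ℝ) *
            (((M+1).factorial : ℝ) / (k1.factorial * (j+1).factorial * (M+1 - k1 - (j+1)).factorial)) *
            ((1-p)^(2*k1) * (2*(1-p)*p)^(j+1) * p^(2*(M+1-k1-(j+1)))) * t^(2*k1+(j+1)-1) := by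
    intro k1 _
    rw [Finset.sum_range_succ']
    simp
  rw [Finset.sum_congr rfl step1]
  rw [Finset.sum_range_succ]
  simp only [Nat.sub_self, Finset.range_zero, Finset.sum_empty, add_zero]
  have key : ∀ k1 ∈ range (M+1), ∀ j ∈ range (M + 1 - k1),
      ((j+1:ℕ):ℝ) *
        (((M+1).factorial : ℝ) / (k1.factorial * (j+1).factorial * (M+1 - k1 - (j+1)).factorial)) *
        ((1-p)^(2*k1) * (2*(1-p)*p)^(j+1) * p^(2*(M+1-k1-(j+1)))) * t^(2*k1+(j+1)-1)
      = (2*(M+1)*(1-p)*p) *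
        (((M.factorial : ℝ) / (k1.factorial * j.factorial * (M - k1 - j).factorial))
          * ((1-p)^2*t^2) ^ k1 * (2*(1-p)*p*t) ^ j * (p^2) ^ (M - k1 - j)) := by
    intro k1 hk1 j hj
    have hk1' : k1 ≤ M := Nat.lt_succ_iff.mp (Finset.mem_range.mp hk1)
    have hj' : j ≤ M - k1 := by have := Finset.mem_range.mp hj; omega
    have hsub : M + 1 - k1 - (j+1) = M - k1 - j := by omega
    have hfacN : ((M+1).factorial : ℝ) = (M+1) * M.factorial := by
      rw [Nat.factorial_succ]; push_cast; ring
    have hfacj : ((j+1).factorial : ℝ) = (j+1) * j.factorial := by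
      rw [Nat.factorial_succ]; push_cast; ring
    have hexpt : 2*k1 + (j+1) - 1 = 2*k1 + j := by omega
    rw [hsub, hfacN, hfacj, hexpt]
    have h1 : (k1.factorial : ℝ) ≠ 0 := Nat.cast_ne_zero.mpr k1.factorial_ne_zero
    have h2 : (j.factorial : ℝ) ≠ 0 := Nat.cast_ne_zero.mpr j.factorial_ne_zero
    have h4 : ((M - k1 - j).factorial : ℝ) ≠ 0 := Nat.cast_ne_zero.mpr (M - k1 - j).factorial_ne_zero
    have hj1 : ((j:ℝ)+1) ≠ 0 := by positivity
    simp only [pow_add, pow_mul, mul_pow, pow_one]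
    push_cast
    field_simp
  rw [Finset.sum_congr rfl (fun k1 hk1 => Finset.sum_congr rfl (key k1 hk1))]
  have hrange : ∀ k1 ∈ range (M+1), (range (M + 1 - k1)) = (range (M - k1 + 1)) := by
    intro k1 hk1
    have := Finset.mem_range.mp hk1
    congr 1
    omega
  rw [Finset.sum_congr rfl (fun k1 hk1 => Finset.sum_congr (hrange k1 hk1) (fun j _ => rfl))]
  simp only [← Finset.mul_sum]
  rw [trinomial M ((1-p)^2*t^2) (2*(1-p)*p*t) (p^2)]
  have h5 : (1-p)^2*t^2 + 2*(1-p)*p*t + p^2 = ((1-p)*t+p)^2 := by ring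
  rw [h5, ← pow_mul]
  have h6 : 2 * (M + 1) - 2 = M * 2 := by omega
  rw [h6]
  push_cast
  ring

lemma Ffun_hasDerivAt (N : ℕ) (p t : ℝ) :
    HasDerivAt (Ffun N p)
      (∑ k1 ∈ range (N+1), ∑ k2 ∈ range (N - k1 + 1),
        (if k2 = 0 then (0:ℝ) else
          (k2:ℝ) *
            ((N.factorial : ℝ) / (k1.factorial * k2.factorial * (N - k1 - k2).factorial)) *
            ((1-p)^(2*k1) * (2*(1-p)*p)^k2 * p^(2*(N-k1-k2))) * t^(2*k1+k2-1))) t := by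
  unfold Ffun
  refine HasDerivAt.fun_sum fun k1 _ => HasDerivAt.fun_sum fun k2 _ => ?_
  by_cases h : k2 = 0
  · simp only [h, if_true, reduceIte]
    exact hasDerivAt_const t 0
  · simp only [h, if_false]
    set A : ℝ := ((k2:ℝ)/(2*k1+k2)) *
        ((N.factorial : ℝ) / (k1.factorial * k2.factorial * (N - k1 - k2).factorial)) *
        ((1-p)^(2*k1) * (2*(1-p)*p)^k2 * p^(2*(N-k1-k2))) with hA
    have hd : HasDerivAt (fun t : ℝ => A * t^(2*k1+k2))
        (A * (((2*k1+k2 : ℕ):ℝ) * t^(2*k1+k2-1))) t := (hasDerivAt_pow (2*k1+k2) t).const_mul A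
    have hs : ((2*k1+k2 : ℕ) : ℝ) ≠ 0 := by
      have : k2 ≠ 0 := h
      positivity
    have hval : A * (((2*k1+k2 : ℕ):ℝ) * t^(2*k1+k2-1)) =
        (k2:ℝ) *
          ((N.factorial : ℝ) / (k1.factorial * k2.factorial * (N - k1 - k2).factorial)) *
          ((1-p)^(2*k1) * (2*(1-p)*p)^k2 * p^(2*(N-k1-k2))) * t^(2*k1+k2-1) := by
      rw [hA]
      push_cast at hs ⊢
      field_simp
    rw [hval] at hd
    exact hd

lemma Gfun_hasDerivAt (N : ℕ) (hN : 1 ≤ N) (p t : ℝ) :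
    HasDerivAt (fun t : ℝ => (2*N*p/(2*(N:ℝ)-1)) * ((1-p)*t+p)^(2*N-1))
      (2*N*(1-p)*p*((1-p)*t+p)^(2*N-2)) t := by
  have hlin : HasDerivAt (fun t : ℝ => (1-p)*t+p) (1-p) t := by
    simpa using ((hasDerivAt_id t).const_mul (1-p)).add_const p
  have hd := (hlin.pow (2*N-1)).const_mul (2*N*p/(2*(N:ℝ)-1))
  have hNe : (2*(N:ℝ)-1) ≠ 0 := by
    have : (1:ℝ) ≤ N := by exact_mod_cast hN
    nlinarith
  have hcast : ((2*N-1 : ℕ) : ℝ) = 2*(N:ℝ)-1 := by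
    have : 1 ≤ 2*N := by omega
    push_cast [Nat.cast_sub this]
    ring
  have hsub : 2*N-1-1 = 2*N-2 := by omega
  refine HasDerivAt.congr_deriv hd ?_
  rw [hsub, hcast]
  field_simp
  
lemma pmf00 (N : ℕ) (p : ℝ) : multinomialPMF N p 0 0 = p ^ (2*N) := by
  have h : (N.factorial : ℝ) ≠ 0 := Nat.cast_ne_zero.mpr N.factorial_ne_zero
  simp [multinomialPMF, div_self h]

lemma expectation_eq (N : ℕ) (hN : 1 ≤ N) (p : ℝ) :
    expectation_g N p = p ^ (2*N) + Ffun N p 1 := by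
  unfold expectation_g Ffun
  have hterm : ∀ k1 ∈ range (N+1), ∀ k2 ∈ range (N - k1 + 1),
      g k1 k2 * multinomialPMF N p k1 k2 =
        (if k1 = 0 ∧ k2 = 0 then multinomialPMF N p k1 k2 else 0) +
        (if k2 = 0 then 0 else
          ((k2:ℝ)/(2*k1+k2)) *
            ((N.factorial : ℝ) / (k1.factorial * k2.factorial * (N - k1 - k2).factorial)) *
            ((1-p)^(2*k1) * (2*(1-p)*p)^k2 * p^(2*(N-k1-k2))) * (1:ℝ)^(2*k1+k2)) := by
    intro k1 _ k2 _
    by_cases h2 : k2 = 0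
    · by_cases h1 : k1 = 0 <;> simp [g, h1, h2]
    · simp only [h2, if_false, and_false, one_pow, mul_one]
      unfold g multinomialPMF
      simp only [h2, and_false, if_false]
      ring
  rw [Finset.sum_congr rfl (fun k1 hk1 => Finset.sum_congr rfl (hterm k1 hk1))]
  have hsplit : ∀ k1 ∈ range (N+1),
      (∑ k2 ∈ range (N - k1 + 1),
        ((if k1 = 0 ∧ k2 = 0 then multinomialPMF N p k1 k2 else 0) +
        (if k2 = 0 then 0 else
          ((k2:ℝ)/(2*k1+k2)) *
            ((N.factorial : ℝ) / (k1.factorial * k2.factorial * (N - k1 - k2).factorial)) *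
            ((1-p)^(2*k1) * (2*(1-p)*p)^k2 * p^(2*(N-k1-k2))) * (1:ℝ)^(2*k1+k2))))
      = (if k1 = 0 then multinomialPMF N p 0 0 else 0) +
        (∑ k2 ∈ range (N - k1 + 1),
          (if k2 = 0 then 0 else
            ((k2:ℝ)/(2*k1+k2)) *
              ((N.factorial : ℝ) / (k1.factorial * k2.factorial * (N - k1 - k2).factorial)) *
              ((1-p)^(2*k1) * (2*(1-p)*p)^k2 * p^(2*(N-k1-k2))) * (1:ℝ)^(2*k1+k2))) := by
    intro k1 _
    rw [Finset.sum_add_distrib]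
    congr 1
    rw [Finset.sum_range_succ']
    by_cases h1 : k1 = 0 <;> simp [h1]
  rw [Finset.sum_congr rfl hsplit, Finset.sum_add_distrib]
  congr 1
  rw [Finset.sum_range_succ']
  simp [pmf00]

theorem error_probability_estimator_overestimates
    (N : ℕ) (hN : 1 ≤ N) (p : ℝ) (hp : p ∈ Set.Icc (0 : ℝ) 1) :
    0 ≤ (p - p ^ (2 * N)) / (2 * (N : ℝ) - 1) ∧ p ≤ expectation_g N p := by
  obtain ⟨hp0, hp1⟩ := hp
  have hN1 : (1:ℝ) ≤ N := by exact_mod_cast hN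
  have hNe : (2*(N:ℝ)-1) ≠ 0 := by nlinarith
  have hNpos : (0:ℝ) < 2*(N:ℝ)-1 := by nlinarith
  have hfirst : 0 ≤ (p - p ^ (2 * N)) / (2 * (N : ℝ) - 1) := by
    apply div_nonneg _ (le_of_lt hNpos)
    have : p ^ (2*N) ≤ p ^ 1 := pow_le_pow_of_le_one hp0 hp1 (by omega)
    simpa using this
  refine ⟨hfirst, ?_⟩
  -- compute Ffun N p 1 via the fundamental theorem of calculus
  set D : ℝ → ℝ := fun t => 2*N*(1-p)*p*((1-p)*t+p)^(2*N-2) with hD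
  have hInt : IntervalIntegrable D MeasureTheory.volume 0 1 := by
    apply Continuous.intervalIntegrable
    fun_prop
  have hF : ∀ x ∈ Set.uIcc (0:ℝ) 1, HasDerivAt (Ffun N p) (D x) x := by
    intro x _
    have h := Ffun_hasDerivAt N p x
    rwa [deriv_sum_eq N hN p x] at h
  have hG : ∀ x ∈ Set.uIcc (0:ℝ) 1,
      HasDerivAt (fun t : ℝ => (2*N*p/(2*(N:ℝ)-1)) * ((1-p)*t+p)^(2*N-1)) (D x) x :=
    fun x _ => Gfun_hasDerivAt N hN p x
  have hFint := intervalIntegral.integral_eq_sub_of_hasDerivAt hF hInt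
  have hGint := intervalIntegral.integral_eq_sub_of_hasDerivAt hG hInt
  have hF0 : Ffun N p 0 = 0 := by
    unfold Ffun
    refine Finset.sum_eq_zero fun k1 _ => Finset.sum_eq_zero fun k2 _ => ?_
    by_cases h2 : k2 = 0
    · simp [h2]
    · rw [if_neg h2, zero_pow (by omega : 2*k1+k2 ≠ 0), mul_zero]
  have hval : Ffun N p 1 =
      (2*N*p/(2*(N:ℝ)-1)) * ((1-p)*1+p)^(2*N-1) - (2*N*p/(2*(N:ℝ)-1)) * ((1-p)*0+p)^(2*N-1) := by
    rw [← hGint, hFint, hF0, sub_zero]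
  have hsimp : Ffun N p 1 = (2*N*p/(2*(N:ℝ)-1)) * (1 - p^(2*N-1)) := by
    rw [hval]
    have : (1-p)*1+p = 1 := by ring
    rw [this, one_pow]
    have : (1-p)*0+p = p := by ring
    rw [this]
    ring
  rw [expectation_eq N hN p, hsimp]
  have hp2 : p ^ (2*N) = p ^ (2*N-1) * p := by
    rw [← pow_succ]
    congr 1
    omega
  have hgoal : p ^ (2*N) + (2*N*p/(2*(N:ℝ)-1)) * (1 - p^(2*N-1))
      = p + (p - p ^ (2*N)) / (2*(N:ℝ)-1) := by
    field_simp
    nlinarith [hp2]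
  rw [hgoal]
  linarith [hfirst]
end

section
/- For every integer R ≥ 1 and every p ∈ [0,1], the identity ∑_{i=1}^{R} C(R, R-(i-1)) (1-p)^{R-(i-1)} p^{i-1} = 1 - p^R holds. Consequently, if each of N tags is independently missed in each of R independent reader sessions with probability p ∈ [0,1), with all NR read/miss events mutually independent, and K_i denotes the number of tags read in exactly R-(i-1) sessions, then E[(∑_{i=1}^{R} K_i)/(1 - p^R)] = N, i.e., the generalized tag-set-cardinality estimator evaluated at the true error probability is unbiased. -/
open MeasureTheory Finset

/-- Product measure modelling `N` tags read in `R` sessions, where `ω (t, s) = true` means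
tag `t` is missed in session `s`; misses are i.i.d. Bernoulli(`p`). -/
noncomputable def readingMeasure (N R : ℕ) (p : ℝ) (hp : p ≤ 1) :
    Measure (Fin N × Fin R → Bool) :=
  Measure.pi fun _ : Fin N × Fin R =>
    (PMF.bernoulli (Real.toNNReal p) (Real.toNNReal_le_one.mpr hp)).toMeasure

/-- `K N R i ω` is the number of tags read in exactly `R - (i - 1)` of the `R` sessions. -/
def K (N R i : ℕ) (ω : Fin N × Fin R → Bool) : ℕ :=
  (Finset.univ.filter fun t : Fin N =>
    (Finset.univ.filter fun s : Fin R => ω (t, s) = false).card = R - (i - 1)).card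

lemma sumK_eq (N R : ℕ) (hR : 1 ≤ R) (ω : Fin N × Fin R → Bool) :
    ∑ i ∈ Finset.Icc 1 R, (K N R i ω : ℝ)
      = ∑ t : Fin N, (if ∀ s, ω (t, s) = true then (0:ℝ) else 1) := by
  have hK : ∀ i, (K N R i ω : ℝ) = ∑ t : Fin N,
      (if (Finset.univ.filter fun s : Fin R => ω (t, s) = false).card = R - (i - 1) then (1:ℝ)
        else 0) := by
    intro i
    rw [K, Finset.card_filter]
    push_cast
    rfl
  simp only [hK]
  rw [Finset.sum_comm]
  apply Finset.sum_congr rfl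
  intro t _
  set c := (Finset.univ.filter fun s : Fin R => ω (t, s) = false).card with hc
  have hcR : c ≤ R := le_trans (Finset.card_filter_le _ _) (by simp)
  have hiff : (∀ s, ω (t, s) = true) ↔ c = 0 := by
    rw [hc, Finset.card_eq_zero, Finset.filter_eq_empty_iff]
    simp
  rw [Finset.sum_boole]
  by_cases h : c = 0
  · have : Finset.filter (fun i => c = R - (i - 1)) (Finset.Icc 1 R) = ∅ := by
      apply Finset.filter_eq_empty_iff.mpr
      intro i hi
      rw [Finset.mem_Icc] at hi
      omega
    simp [this, hiff.mpr h]
  · have : Finset.filter (fun i => c = R - (i - 1)) (Finset.Icc 1 R) = {R - c + 1} := by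
      ext i
      simp only [Finset.mem_filter, Finset.mem_Icc, Finset.mem_singleton]
      omega
    rw [this]
    simp [hiff, h]

lemma readingMeasure_allmiss (N R : ℕ) (p : ℝ) (hp : p ≤ 1) (t : Fin N) :
    readingMeasure N R p hp {ω | ∀ s, ω (t, s) = true} = (ENNReal.ofReal p) ^ R := by
  have hset : {ω : Fin N × Fin R → Bool | ∀ s, ω (t, s) = true}
      = Set.pi Set.univ (fun c : Fin N × Fin R => if c.1 = t then {true} else Set.univ) := by
    ext ω
    simp only [Set.mem_setOf_eq, Set.mem_pi, Set.mem_univ, forall_true_left]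
    constructor
    · rintro h ⟨a, s⟩
      by_cases ha : a = t
      · subst ha; simp [h s]
      · simp [ha]
    · intro h s
      have := h (t, s)
      simpa using this
  rw [hset, readingMeasure, Measure.pi_pi]
  have hone : ∀ c : Fin N × Fin R,
      (PMF.bernoulli (Real.toNNReal p) (Real.toNNReal_le_one.mpr hp)).toMeasure
        (if c.1 = t then ({true} : Set Bool) else Set.univ)
        = if c.1 = t then ENNReal.ofReal p else 1 := by
    intro c
    by_cases hc : c.1 = t
    · simp only [hc, if_true]
      rw [PMF.toMeasure_apply_singleton _ _ (measurableSet_singleton _)]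
      rfl
    · rw [if_neg hc, if_neg hc]; exact measure_univ
  simp only [hone]
  rw [Fintype.prod_prod_type]
  have : ∀ x : Fin N, (∏ _s : Fin R, if x = t then ENNReal.ofReal p else 1)
      = if x = t then ENNReal.ofReal p ^ R else 1 := by
    intro x
    by_cases hx : x = t <;> simp [hx, Finset.prod_const]
  simp only [this]
  simp [Finset.prod_ite_eq']

lemma integral_miss_indicator (N R : ℕ) (p : ℝ) (hp : p ≤ 1) (t : Fin N) (hp0 : 0 ≤ p) :
    ∫ ω, (if ∀ s, ω (t, s) = true then (0:ℝ) else 1) ∂(readingMeasure N R p hp)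
      = 1 - p ^ R := by
  have hprob : IsProbabilityMeasure (readingMeasure N R p hp) := by
    rw [readingMeasure]; infer_instance
  have hfun : (fun ω : Fin N × Fin R → Bool => if ∀ s, ω (t, s) = true then (0:ℝ) else 1)
      = Set.indicator {ω | ¬ ∀ s, ω (t, s) = true} (fun _ => (1:ℝ)) := by
    ext ω
    by_cases h : ∀ s, ω (t, s) = true
    · simp [Set.indicator_apply, h]
    · push_neg at h
      obtain ⟨s, hs⟩ := h
      simp only [Bool.not_eq_true] at hs
      rw [if_neg (fun hall => by simpa [hs] using hall s), Set.indicator_apply]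
      exact (if_pos (show ω ∈ {ω : Fin N × Fin R → Bool | ¬∀ s, ω (t, s) = true} from
        fun hall => by simpa [hs] using hall s)).symm
  rw [hfun, MeasureTheory.integral_indicator_const _ ((Set.toFinite _).measurableSet)]
  have hcompl : {ω : Fin N × Fin R → Bool | ¬ ∀ s, ω (t, s) = true}
      = {ω | ∀ s, ω (t, s) = true}ᶜ := rfl
  rw [hcompl, measureReal_def, measure_compl ((Set.toFinite _).measurableSet) (measure_ne_top _ _), measure_univ,
    readingMeasure_allmiss]
  rw [smul_eq_mul, mul_one, ENNReal.toReal_sub_of_le (by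
      exact pow_le_one' (ENNReal.ofReal_le_one.mpr hp) R) (by simp)]
  simp [ENNReal.toReal_pow, ENNReal.toReal_ofReal hp0]

theorem generalized_cardinality_estimator_unbiased
    (R : ℕ) (hR : 1 ≤ R) (p : ℝ) (hp : p ∈ Set.Icc (0 : ℝ) 1) (N : ℕ) :
    (∑ i ∈ Finset.Icc 1 R,
        (R.choose (R - (i - 1)) : ℝ) * (1 - p) ^ (R - (i - 1)) * p ^ (i - 1) = 1 - p ^ R) ∧
    (p < 1 →
      ∫ ω, (∑ i ∈ Finset.Icc 1 R, (K N R i ω : ℝ)) / (1 - p ^ R)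
          ∂(readingMeasure N R p hp.2) = (N : ℝ)) := by
  obtain ⟨hp0, hp1⟩ := Set.mem_Icc.mp hp
  constructor
  · rw [show Finset.Icc 1 R = Finset.Ico 1 (R+1) from (Finset.Ico_add_one_right_eq_Icc 1 R).symm,
      Finset.sum_Ico_eq_sum_range]
    have hbin : ∑ k ∈ Finset.range (R+1), p ^ k * (1-p) ^ (R-k) * (R.choose k : ℝ) = 1 := by
      have h := add_pow p (1-p) R
      simp only [add_sub_cancel, one_pow] at h
      exact h.symm
    rw [Finset.sum_range_succ] at hbin
    simp only [Nat.sub_self, pow_zero, Nat.choose_self, Nat.cast_one, mul_one] at hbin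
    have : ∑ j ∈ Finset.range R,
          (R.choose (R - (1 + j - 1)) : ℝ) * (1 - p) ^ (R - (1 + j - 1)) * p ^ (1 + j - 1)
        = ∑ j ∈ Finset.range R, p ^ j * (1-p) ^ (R-j) * (R.choose j : ℝ) := by
      apply Finset.sum_congr rfl
      intro j hj
      have hj' : j < R := Finset.mem_range.mp hj
      have h1 : 1 + j - 1 = j := by omega
      rw [h1, Nat.choose_symm hj'.le]
      ring
    simp only [Nat.add_sub_cancel]
    rw [this]
    linarith
  · intro hplt
    haveI hprob : IsProbabilityMeasure (readingMeasure N R p hp.2) := by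
      rw [readingMeasure]; infer_instance
    have hne : (1 : ℝ) - p ^ R ≠ 0 := by
      have : p ^ R < 1 := pow_lt_one₀ hp0 hplt (by omega)
      linarith
    calc ∫ ω, (∑ i ∈ Finset.Icc 1 R, (K N R i ω : ℝ)) / (1 - p ^ R)
            ∂(readingMeasure N R p hp.2)
        = ∫ ω, (∑ t : Fin N, (if ∀ s, ω (t, s) = true then (0:ℝ) else 1)) / (1 - p ^ R)
            ∂(readingMeasure N R p hp.2) := by
          apply integral_congr_ae
          filter_upwards with ω
          rw [sumK_eq N R hR ω]
      _ = (∫ ω, (∑ t : Fin N, (if ∀ s, ω (t, s) = true then (0:ℝ) else 1))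
            ∂(readingMeasure N R p hp.2)) / (1 - p ^ R) := integral_div _ _
      _ = (∑ t : Fin N, ∫ ω, (if ∀ s, ω (t, s) = true then (0:ℝ) else 1)
            ∂(readingMeasure N R p hp.2)) / (1 - p ^ R) := by
          rw [integral_finset_sum _ (fun t _ => Integrable.of_finite)]
      _ = (∑ _t : Fin N, (1 - p ^ R)) / (1 - p ^ R) := by
          rw [Finset.sum_congr rfl fun t _ => integral_miss_indicator N R p hp.2 t hp0]
      _ = (N : ℝ) := by
          rw [Finset.sum_const, Finset.card_univ, Fintype.card_fin, nsmul_eq_mul,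
            mul_div_assoc, div_self hne, mul_one]
end

section
/- For every integer N ≥ 1 and every p ∈ (0,1), the finite double sum ∑_{k1=0}^{N} ∑_{k2=1}^{N-k1} (k2/(2k1 + k2)) · (N!/(k1! k2! (N-k1-k2)!)) · (1-p)^{2k1} · (2(1-p)p)^{k2} · p^{2(N-k1-k2)} equals 2N(p - p^{2N})/(2N - 1). -/
open Finset Polynomial

-- trinomial expansion as a polynomial identity
lemma tri_poly (M : ℕ) :
    ∑ k1 ∈ range (M+1), ∑ j ∈ range (M+1-k1),
      (C ((M.choose k1 * (M-k1).choose j * 2^j : ℕ) : ℝ)) * X^(2*k1+j)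
    = (1 + X : ℝ[X])^(2*M) := by
  have h1 : (1 + X : ℝ[X])^(2*M) = ((X^2 + (2*X+1)) : ℝ[X])^M := by
    rw [pow_mul]
    have h2 : ((1 : ℝ[X]) + X)^2 = X^2 + (2*X+1) := by ring
    rw [h2]
  rw [h1, add_pow]
  refine Finset.sum_congr rfl fun k1 hk1 => ?_
  rw [add_pow]
  rw [Finset.mul_sum, Finset.sum_mul]
  have : M + 1 - k1 = (M - k1) + 1 := by
    have := Finset.mem_range.mp hk1; omega
  rw [this]
  refine Finset.sum_congr rfl fun j hj => ?_
  simp only [map_mul, map_pow, C_eq_natCast, map_ofNat, one_pow, pow_add, pow_mul]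
  push_cast
  ring

lemma tri_coeff (M s : ℕ) :
    ∑ k1 ∈ range (M+1), ∑ j ∈ range (M+1-k1),
      (if 2*k1+j = s then ((M.choose k1 * (M-k1).choose j * 2^j : ℕ) : ℝ) else 0)
    = ((2*M).choose s : ℝ) := by
  have := congrArg (fun f : ℝ[X] => f.coeff s) (tri_poly M)
  simp only [finset_sum_coeff, coeff_C_mul, coeff_X_pow, coeff_one_add_X_pow] at this
  rw [← this]
  refine Finset.sum_congr rfl fun k1 _ => Finset.sum_congr rfl fun j _ => ?_
  by_cases h : 2*k1+j = s
  · subst h; simp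
  · simp [h, Ne.symm h]

lemma tri_sum (M : ℕ) (g : ℕ → ℝ) :
    ∑ k1 ∈ range (M+1), ∑ j ∈ range (M+1-k1),
      ((M.choose k1 * (M-k1).choose j * 2^j : ℕ) : ℝ) * g (2*k1+j)
    = ∑ s ∈ range (2*M+1), ((2*M).choose s : ℝ) * g s := by
  have key : ∀ k1 ∈ range (M+1), ∀ j ∈ range (M+1-k1),
      ((M.choose k1 * (M-k1).choose j * 2^j : ℕ) : ℝ) * g (2*k1+j)
      = ∑ s ∈ range (2*M+1),
          (if 2*k1+j = s then ((M.choose k1 * (M-k1).choose j * 2^j : ℕ) : ℝ) else 0) * g s := by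
    intro k1 hk1 j hj
    rw [Finset.mem_range] at hk1 hj
    simp only [ite_mul, zero_mul]
    rw [Finset.sum_ite_eq (range (2*M+1)) (2*k1+j)
        (fun s => ((M.choose k1 * (M-k1).choose j * 2^j : ℕ) : ℝ) * g s),
      if_pos (Finset.mem_range.mpr (by omega))]
  rw [Finset.sum_congr rfl fun k1 hk1 => Finset.sum_congr rfl (key k1 hk1)]
  rw [Finset.sum_congr rfl fun k1 _ => Finset.sum_comm]
  rw [Finset.sum_comm]
  refine Finset.sum_congr rfl fun s _ => ?_
  rw [← tri_coeff M s, Finset.sum_mul]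
  exact Finset.sum_congr rfl fun k1 _ => (Finset.sum_mul _ _ _).symm

lemma binom_tail (M : ℕ) (p q : ℝ) (hq : q ≠ 0) (hpq : p + q = 1) :
    ∑ s ∈ range (2*M+1), ((2*M).choose s : ℝ) * (q^s * p^(2*M-s) / (s+1))
    = (1 - p^(2*M+1)) / ((2*M+1) * q) := by
  have h2M : ((2*M+1 : ℕ) : ℝ) ≠ 0 := by positivity
  rw [eq_div_iff (by positivity)]
  have step : ∀ s ∈ range (2*M+1),
      ((2*M).choose s : ℝ) * (q^s * p^(2*M-s) / (s+1)) * ((2*M+1) * q)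
      = ((2*M+1).choose (s+1) : ℝ) * (q^(s+1) * p^(2*M+1-(s+1))) := by
    intro s hs
    rw [Finset.mem_range] at hs
    have hchR : ((2*M:ℕ)+1 : ℝ) * ((2*M).choose s : ℝ) = ((2*M+1).choose (s+1) : ℝ) * (s+1) := by
      exact_mod_cast congrArg (fun n : ℕ => (n : ℝ)) (Nat.add_one_mul_choose_eq (2*M) s)
    push_cast at hchR
    have hsub : 2*M+1-(s+1) = 2*M-s := by omega
    rw [hsub, pow_succ]
    have hs1 : ((s:ℝ)+1) ≠ 0 := by positivity
    field_simp
    linear_combination p^(2*M-s) * hchR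
  rw [Finset.sum_mul, Finset.sum_congr rfl step]
  have hqp : q + p = 1 := by linarith
  have expand := add_pow q p (2*M+1)
  rw [hqp, one_pow, Finset.sum_range_succ'] at expand
  simp only [pow_zero, one_mul, Nat.choose_zero_right, Nat.cast_one, mul_one, Nat.sub_zero] at expand
  have hco : ∑ x ∈ range (2*M+1), ((2*M+1).choose (x+1) : ℝ) * (q^(x+1) * p^(2*M+1-(x+1)))
      = ∑ x ∈ range (2*M+1), q^(x+1) * p^(2*M+1-(x+1)) * ((2*M+1).choose (x+1) : ℝ) :=
    Finset.sum_congr rfl fun x _ => by ring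
  rw [hco]
  linarith [expand]

lemma sum_Icc_one (n : ℕ) (f : ℕ → ℝ) : ∑ k ∈ Icc 1 n, f k = ∑ j ∈ range n, f (j+1) := by
  induction n with
  | zero => simp
  | succ n ih => rw [Finset.sum_range_succ, ← ih, Finset.sum_Icc_succ_top (by omega)]

theorem central_summation_identity (N : ℕ) (hN : 1 ≤ N) (p : ℝ) (hp : p ∈ Set.Ioo (0 : ℝ) 1) :
    ∑ k1 ∈ Finset.range (N + 1), ∑ k2 ∈ Finset.Icc 1 (N - k1),
      ((k2 : ℝ) / (2 * k1 + k2)) *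
        (((N.factorial : ℝ) / (k1.factorial * k2.factorial * (N - k1 - k2).factorial)) *
          (1 - p) ^ (2 * k1) * (2 * (1 - p) * p) ^ k2 * p ^ (2 * (N - k1 - k2)))
      = 2 * (N : ℝ) * (p - p ^ (2 * N)) / (2 * (N : ℝ) - 1) := by
  obtain ⟨M, rfl⟩ : ∃ M, N = M + 1 := ⟨N - 1, by omega⟩
  obtain ⟨hp0, hp1⟩ := hp
  have hq : (1 : ℝ) - p ≠ 0 := by linarith
  have hq0 : (0:ℝ) < 1 - p := by linarith
  -- peel off the empty k1 = M+1 term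
  rw [Finset.sum_range_succ]
  rw [show Finset.Icc 1 (M+1-(M+1)) = ∅ by simp, Finset.sum_empty, add_zero]
  -- reindex inner sums
  rw [Finset.sum_congr rfl fun k1 _ => sum_Icc_one (M + 1 - k1) _]
  -- termwise rewrite
  have hterm : ∀ k1 ∈ range (M+1), ∀ j ∈ range (M + 1 - k1),
      (((j+1 : ℕ) : ℝ) / (2 * k1 + ((j+1 : ℕ) : ℝ))) *
        ((((M+1).factorial : ℝ) / (k1.factorial * (j+1).factorial * (M+1 - k1 - (j+1)).factorial)) *
          (1 - p) ^ (2 * k1) * (2 * (1 - p) * p) ^ (j+1) * p ^ (2 * (M+1 - k1 - (j+1))))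
      = (2*(M+1)*(1-p)*p) * (((M.choose k1 * (M-k1).choose j * 2^j : ℕ) : ℝ) *
          ((1-p)^(2*k1+j) * p^(2*M-(2*k1+j)) / ((2*k1+j : ℕ) + 1))) := by
    intro k1 hk1 j hj
    rw [Finset.mem_range] at hk1 hj
    obtain ⟨k3, hk3⟩ : ∃ k3, M = k1 + j + k3 := ⟨M - k1 - j, by omega⟩
    have e1 : M + 1 - k1 - (j+1) = k3 := by omega
    have e2 : 2*M - (2*k1+j) = j + 2*k3 := by omega
    rw [e1, e2]
    have hc2 : (M-k1).choose j * j.factorial * k3.factorial = (M-k1).factorial := by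
      have := Nat.choose_mul_factorial_mul_factorial (n := M - k1) (k := j) (by omega)
      rwa [show M - k1 - j = k3 by omega] at this
    have hc1 : M.choose k1 * k1.factorial * (M - k1).factorial = M.factorial :=
      Nat.choose_mul_factorial_mul_factorial (by omega)
    have hfac : (M+1).factorial = (M+1) * (M.choose k1 * ((M-k1).choose j *
        (k1.factorial * (j.factorial * k3.factorial)))) := by
      rw [Nat.factorial_succ]
      congr 1
      rw [← hc1, ← hc2]
      ring
    have hfacR : (((M+1).factorial : ℕ) : ℝ) = ((M:ℝ)+1) * (M.choose k1 : ℝ) *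
        ((M-k1).choose j : ℝ) * (k1.factorial : ℝ) * (j.factorial : ℝ) * (k3.factorial : ℝ) := by
      rw [hfac]; push_cast; ring
    have hjf : (((j+1).factorial : ℕ) : ℝ) = ((j:ℝ)+1) * (j.factorial : ℝ) := by
      rw [Nat.factorial_succ]; push_cast; ring
    have nz1 : (k1.factorial : ℝ) ≠ 0 := by positivity
    have nz2 : (j.factorial : ℝ) ≠ 0 := by positivity
    have nz3 : (k3.factorial : ℝ) ≠ 0 := by positivity
    have nz4 : (2 * (k1:ℝ) + ((j:ℝ)+1)) ≠ 0 := by positivity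
    have nz5 : (((2*k1+j : ℕ):ℝ) + 1) ≠ 0 := by positivity
    rw [hfacR, hjf]
    rw [show (2*(1-p)*p)^(j+1) = 2*2^j * ((1-p)*(1-p)^j) * (p*p^j) by
      rw [mul_pow, mul_pow, pow_succ, pow_succ, pow_succ]; ring]
    rw [pow_add (1-p) (2*k1) j, pow_add p j (2*k3)]
    push_cast
    field_simp
    ring
  rw [Finset.sum_congr rfl fun k1 hk1 => Finset.sum_congr rfl (hterm k1 hk1)]
  have hpull : ∀ k1 ∈ range (M+1), ∑ j ∈ range (M + 1 - k1),
      (2*((M:ℝ)+1)*(1-p)*p) * (((M.choose k1 * (M-k1).choose j * 2^j : ℕ) : ℝ) *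
          ((1-p)^(2*k1+j) * p^(2*M-(2*k1+j)) / ((2*k1+j : ℕ) + 1)))
      = (2*((M:ℝ)+1)*(1-p)*p) * ∑ j ∈ range (M + 1 - k1),
          (((M.choose k1 * (M-k1).choose j * 2^j : ℕ) : ℝ) *
          ((1-p)^(2*k1+j) * p^(2*M-(2*k1+j)) / ((2*k1+j : ℕ) + 1))) := by
    intro k1 _; rw [Finset.mul_sum]
  rw [Finset.sum_congr rfl hpull, ← Finset.mul_sum]
  rw [tri_sum M (fun s => (1-p)^s * p^(2*M-s) / ((s:ℕ) + 1))]
  rw [binom_tail M p (1-p) hq (by ring)]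
  have h2M1 : ((2*M:ℝ)+1) ≠ 0 := by positivity
  have hcast : (2 * ((M:ℝ)+1) - 1) = 2*(M:ℝ)+1 := by ring
  have hpow : p ^ (2*(M+1)) = p * p^(2*M+1) := by
    rw [show 2*(M+1) = (2*M+1)+1 by ring, pow_succ]; ring
  push_cast
  rw [hpow, hcast]
  field_simp
end
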